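/- Assume all users have the common deadline T, i.e. d u = T for every u. Define Λ(A) as the maximum cardinality of a set B ⊆ {1,…,T} such that for every t ∈ {1,…,T}, |B ∩ {1,…,t}| ≤ ∑_{s=1}^{t} A s. Then a set S of users is feasible if and only if ∑_{u ∈ S} ν u ≤ Λ(A). (Feasibility characterization underlying the reduction of RAED-SCSB-COMMON to an unweighted knapsack with cumulative capacity.) -/

import Mathlib

/-- A schedule `σ : ℕ → Option (Fin U)` serves the user set `S`:
(i) the users appearing in slots `{1,…,T}` are exactly those of `S`;
(ii) each `u ∈ S` appears in exactly `ν u` slots;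
(iii) every slot at which a user `u` appears is at most `d u`;
(iv) for every `t ∈ {1,…,T}`, the number of busy slots in `{1,…,t}` is at most
`∑_{s=1}^{t} A s`. -/
def Serves (T U : ℕ) (ν d : Fin U → ℕ) (A : ℕ → ℕ)
    (σ : ℕ → Option (Fin U)) (S : Finset (Fin U)) : Prop :=
  (∀ u : Fin U, u ∈ S ↔ ∃ t ∈ Finset.Icc 1 T, σ t = some u) ∧
  (∀ u ∈ S, ((Finset.Icc 1 T).filter (fun t => σ t = some u)).card = ν u) ∧
  (∀ u : Fin U, ∀ t ∈ Finset.Icc 1 T, σ t = some u → t ≤ d u) ∧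
  (∀ t ∈ Finset.Icc 1 T,
    ((Finset.Icc 1 t).filter (fun s => σ s ≠ none)).card ≤ ∑ s ∈ Finset.Icc 1 t, A s)

/-- A user set is feasible if some schedule serves it. -/
def Feasible (T U : ℕ) (ν d : Fin U → ℕ) (A : ℕ → ℕ) (S : Finset (Fin U)) : Prop :=
  ∃ σ : ℕ → Option (Fin U), Serves T U ν d A σ S

/-- Given a finite set `B` of slots with exactly `∑ u ∈ S, ν u` elements, one can
build an assignment of slots of `B` to users of `S` giving each user `u` exactly
`ν u` slots. -/
lemma build {U : ℕ} (ν : Fin U → ℕ) (S : Finset (Fin U)) :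
    ∀ B : Finset ℕ, B.card = ∑ u ∈ S, ν u →
    ∃ σ : ℕ → Option (Fin U),
      (∀ t u, σ t = some u → t ∈ B ∧ u ∈ S) ∧
      (∀ t ∈ B, σ t ≠ none) ∧
      (∀ u ∈ S, (B.filter (fun t => σ t = some u)).card = ν u) := by
  induction S using Finset.induction_on with
  | empty =>
    intro B hB
    simp only [Finset.sum_empty, Finset.card_eq_zero] at hB
    subst hB
    exact ⟨fun _ => none, by simp, by simp, by simp⟩
  | @insert a S' ha ih =>
    intro B hB
    rw [Finset.sum_insert ha] at hB
    have h1 : ν a ≤ B.card := by omega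
    obtain ⟨B₁, hB₁sub, hB₁card⟩ := Finset.exists_subset_card_eq h1
    have hcard2 : (B \ B₁).card = ∑ u ∈ S', ν u := by
      rw [Finset.card_sdiff_of_subset hB₁sub]; omega
    obtain ⟨σ', h1', h2', h3'⟩ := ih (B \ B₁) hcard2
    refine ⟨fun t => if t ∈ B₁ then some a else σ' t, ?_, ?_, ?_⟩
    · intro t u h
      by_cases htB : t ∈ B₁
      · simp only [htB, if_true, Option.some.injEq] at h
        exact ⟨hB₁sub htB, by simp [← h]⟩
      · simp only [htB, if_false] at h
        obtain ⟨ht, hu⟩ := h1' t u h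
        exact ⟨(Finset.mem_sdiff.mp ht).1, Finset.mem_insert_of_mem hu⟩
    · intro t ht
      by_cases htB : t ∈ B₁
      · simp [htB]
      · simp only [htB, if_false]
        exact h2' t (Finset.mem_sdiff.mpr ⟨ht, htB⟩)
    · intro u hu
      rcases Finset.mem_insert.mp hu with rfl | hu'
      · have : B.filter (fun t => (if t ∈ B₁ then some u else σ' t) = some u) = B₁ := by
          ext t
          simp only [Finset.mem_filter]
          constructor
          · rintro ⟨htB, h⟩
            by_cases htB₁ : t ∈ B₁
            · exact htB₁
            · simp only [htB₁, if_false] at h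
              exact absurd ((h1' t u h).2) ha
          · intro h
            exact ⟨hB₁sub h, by simp [h]⟩
        rw [this, hB₁card]
      · have hau : a ≠ u := fun h => ha (h ▸ hu')
        have : B.filter (fun t => (if t ∈ B₁ then some a else σ' t) = some u)
            = (B \ B₁).filter (fun t => σ' t = some u) := by
          ext t
          simp only [Finset.mem_filter, Finset.mem_sdiff]
          constructor
          · rintro ⟨htB, h⟩
            by_cases htB₁ : t ∈ B₁
            · simp only [htB₁, if_true, Option.some.injEq] at h
              exact absurd h hau
            · simp only [htB₁, if_false] at h
              exact ⟨⟨htB, htB₁⟩, h⟩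
          · rintro ⟨⟨htB, htB₁⟩, h⟩
            exact ⟨htB, by simp [htB₁, h]⟩
        rw [this, h3' u hu']

/-- Feasibility characterization for common deadlines: with `d u = T` for every user,
a set `S` is feasible iff `∑_{u ∈ S} ν u ≤ Λ(A)`, where `Λ(A)` is the maximum
cardinality of a set `B ⊆ {1,…,T}` of busy slots satisfying the cumulative energy
constraints. -/
theorem stmt6 (T U : ℕ) (ν d : Fin U → ℕ) (A : ℕ → ℕ)
    (hν : ∀ i, 1 ≤ ν i) (hd : ∀ u, d u = T)
    (Λ : ℕ)
    (hΛ : IsGreatest {n : ℕ | ∃ B ⊆ Finset.Icc 1 T, B.card = n ∧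
      ∀ t ∈ Finset.Icc 1 T, (B ∩ Finset.Icc 1 t).card ≤ ∑ s ∈ Finset.Icc 1 t, A s} Λ)
    (S : Finset (Fin U)) :
    Feasible T U ν d A S ↔ (∑ u ∈ S, ν u) ≤ Λ := by
  constructor
  · rintro ⟨σ, hmem, hcnt, _, hcap⟩
    set B := (Finset.Icc 1 T).filter (fun t => σ t ≠ none) with hBdef
    have hBcard : B.card = ∑ u ∈ S, ν u := by
      have hB : B = S.biUnion (fun u => (Finset.Icc 1 T).filter (fun t => σ t = some u)) := by
        ext t
        simp only [hBdef, Finset.mem_filter, Finset.mem_biUnion]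
        constructor
        · rintro ⟨ht, hne⟩
          obtain ⟨u, hu⟩ := Option.ne_none_iff_exists'.mp hne
          exact ⟨u, (hmem u).mpr ⟨t, ht, hu⟩, ht, hu⟩
        · rintro ⟨u, _, ht, hu⟩
          exact ⟨ht, by simp [hu]⟩
      rw [hB, Finset.card_biUnion]
      · exact Finset.sum_congr rfl hcnt
      · intro x hx y hy hxy
        apply Finset.disjoint_left.mpr
        intro t ht ht'
        simp only [Finset.mem_filter] at ht ht'
        exact hxy (by rw [← Option.some_inj, ← ht.2, ht'.2])
    apply hΛ.2
    refine ⟨B, Finset.filter_subset _ _, hBcard, ?_⟩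
    intro t ht
    refine le_trans (Finset.card_le_card ?_) (hcap t ht)
    intro s hs
    simp only [Finset.mem_inter, hBdef, Finset.mem_filter] at hs ⊢
    exact ⟨hs.2, hs.1.2⟩
  · intro hle
    obtain ⟨B, hBsub, hBcard, hBcons⟩ := hΛ.1
    have h1 : ∑ u ∈ S, ν u ≤ B.card := by omega
    obtain ⟨B', hB'sub, hB'card⟩ := Finset.exists_subset_card_eq h1
    obtain ⟨σ, hσ1, hσ2, hσ3⟩ := build ν S B' hB'card
    have hB'Icc : B' ⊆ Finset.Icc 1 T := hB'sub.trans hBsub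
    refine ⟨σ, ?_, ?_, ?_, ?_⟩
    · intro u
      constructor
      · intro hu
        have hpos : 0 < (B'.filter (fun t => σ t = some u)).card := by
          rw [hσ3 u hu]; exact hν u
        obtain ⟨t, ht⟩ := Finset.card_pos.mp hpos
        simp only [Finset.mem_filter] at ht
        exact ⟨t, hB'Icc ht.1, ht.2⟩
      · rintro ⟨t, _, ht⟩
        exact (hσ1 t u ht).2
    · intro u hu
      have : (Finset.Icc 1 T).filter (fun t => σ t = some u)
          = B'.filter (fun t => σ t = some u) := by
        ext t
        simp only [Finset.mem_filter]
        exact ⟨fun ⟨_, h⟩ => ⟨(hσ1 t u h).1, h⟩, fun ⟨h, h'⟩ => ⟨hB'Icc h, h'⟩⟩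
      rw [this, hσ3 u hu]
    · intro u t ht hσt
      rw [hd u]
      exact (Finset.mem_Icc.mp ht).2
    · intro t ht
      refine le_trans (Finset.card_le_card ?_) (hBcons t ht)
      intro s hs
      simp only [Finset.mem_filter] at hs
      obtain ⟨u, hu⟩ := Option.ne_none_iff_exists'.mp hs.2
      exact Finset.mem_inter.mpr ⟨hB'sub ((hσ1 s u hu).1), hs.1⟩
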